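/- Let λ ∈ ℂ*, α ∈ ℂ, and define L_i acting on ℂ[t] by L_i · f(t) = λ^i (t − iα) f(t − i) for i ∈ ℤ. Then [L_i, L_j] = (j − i) L_{i+j} as operators on ℂ[t]; that is, L_i(L_j f) − L_j(L_i f) = (j − i) L_{i+j} f for all f ∈ ℂ[t]. -/
import Mathlib


open Polynomial

/-- The action of the Virasoro basis element `L_i` on `ℂ[t]`:
`(L_i f)(t) = λ^i (t - iα) f(t - i)`. -/
noncomputable def virL (lam α : ℂ) (i : ℤ) (f : ℂ[X]) : ℂ[X] :=
  C (lam ^ i) * (X - C ((i : ℂ) * α)) * f.comp (X - C (i : ℂ))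

/-- `[L_i, L_j] = (j - i) L_{i+j}` as operators on `ℂ[t]`. -/
theorem stmt_4 (lam α : ℂ) (hlam : lam ≠ 0) (i j : ℤ) (f : ℂ[X]) :
    virL lam α i (virL lam α j f) - virL lam α j (virL lam α i f) =
      ((j - i : ℤ) : ℂ) • virL lam α (i + j) f := by
  have hc : ∀ a b : ℤ, (f.comp (X - C (a:ℂ))).comp (X - C (b:ℂ)) = f.comp (X - C ((a+b:ℤ) : ℂ)) := by
    intro a b
    rw [Polynomial.comp_assoc]
    push_cast
    congr 1
    simp [sub_comp]
    ring
  simp only [virL, mul_comp, C_comp, X_comp, sub_comp, hc, smul_eq_C_mul, C_mul, C_add, C_neg,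
    C_sub, zpow_add₀ hlam]
  push_cast
  simp only [C_add, C_sub, C_mul]
  ring
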